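/- Let X be a real normed space, M : X → X* bounded linear, self-adjoint and positive semi-definite, and (x^k)_{k≥0} ⊂ X with v^{k+1} := −M(x^{k+1} − x^k). Let F : X → ℝ, G : X → ℝ ∪ {+∞} proper, Ξ : X → X* bounded linear skew-adjoint, and let 𝒢 be the Lagrangian gap. Suppose: Ω ⊆ X with x^0 ∈ Ω; η > 0; Λ̆ : X → X* is self-adjoint with Λ̆ ≤ 2(1−η)M; (ε_k)_{k≥0} ⊂ ℝ satisfies r := sup_{N∈ℕ} Σ_{k=0}^{N−1} ε_k < ∞; whenever x^0, …, x^k ∈ Ω, the descent inequality ⟨v^{k+1}, x^{k+1} − x^k⟩ ≥ 𝒢(x^{k+1}; x^k) − (1/2)‖x^{k+1} − x^k‖_{Λ̆}² − ε_k holds; and for every N ≥ 1, Σ_{k=0}^{N−1} 𝒢(x^{k+1}; x^k) ≤ r implies x^N ∈ Ω. Then x^k ∈ Ω for every k ≥ 0, and for every k ≥ 0: 𝒢(x^{k+1}; x^k) + η ‖x^{k+1} − x^k‖_M² ≤ ε_k. -/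

import Mathlib

theorem stmt12 {X : Type*} [NormedAddCommGroup X] [NormedSpace ℝ X]
    (M : X →L[ℝ] StrongDual ℝ X)
    (hMsa : ∀ u v : X, M u v = M v u) (hMpsd : ∀ u : X, 0 ≤ M u u)
    (x : ℕ → X)
    (F : X → ℝ) (G : X → EReal)
    (hGproper : (∃ u, G u ≠ ⊤) ∧ ∀ u, G u ≠ ⊥)
    (Ξ : X →L[ℝ] StrongDual ℝ X)
    (hΞskew : ∀ u v : X, Ξ u v = -(Ξ v u))
    (gap : X → X → EReal)
    (hgap : ∀ u v : X,
      gap u v = ((F u : EReal) + G u) - ((F v : EReal) + G v) - ((Ξ u v : ℝ) : EReal))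
    (Ω : Set X) (hx0 : x 0 ∈ Ω)
    (η : ℝ) (hη : 0 < η)
    (Λb : X →L[ℝ] StrongDual ℝ X)
    (hΛbsa : ∀ u v : X, Λb u v = Λb v u)
    (hΛbM : ∀ u : X, Λb u u ≤ 2 * (1 - η) * M u u)
    (ε : ℕ → ℝ) (r : ℝ)
    (hr : ∀ N : ℕ, ∑ k ∈ Finset.range N, ε k ≤ r)
    (hdesc : ∀ k : ℕ, (∀ n ≤ k, x n ∈ Ω) →
      gap (x (k + 1)) (x k)
          - (((1 / 2) * Λb (x (k + 1) - x k) (x (k + 1) - x k) : ℝ) : EReal)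
          - ((ε k : ℝ) : EReal)
        ≤ (((-(M (x (k + 1) - x k))) (x (k + 1) - x k) : ℝ) : EReal))
    (hΩimp : ∀ N : ℕ, 1 ≤ N →
      (∑ k ∈ Finset.range N, gap (x (k + 1)) (x k)) ≤ (r : EReal) → x N ∈ Ω) :
    (∀ k : ℕ, x k ∈ Ω)
    ∧ ∀ k : ℕ,
        gap (x (k + 1)) (x k)
            + ((η * M (x (k + 1) - x k) (x (k + 1) - x k) : ℝ) : EReal)
          ≤ ((ε k : ℝ) : EReal) := by
  -- key estimate under the premise that x 0, …, x k ∈ Ω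
  have key : ∀ k : ℕ, (∀ n ≤ k, x n ∈ Ω) →
      gap (x (k + 1)) (x k)
          + ((η * M (x (k + 1) - x k) (x (k + 1) - x k) : ℝ) : EReal)
        ≤ ((ε k : ℝ) : EReal) := by
    intro k hk
    have h := hdesc k hk
    set d := x (k + 1) - x k with hd
    set a := gap (x (k + 1)) (x k) with ha
    set m : ℝ := M d d with hm
    set c : ℝ := (1 / 2) * Λb d d with hc
    have h1 : a - (c : EReal) ≤ ((-M d) d : ℝ) + (ε k : ℝ) :=
      (EReal.sub_le_iff_le_add (.inl (EReal.coe_ne_bot _)) (.inl (EReal.coe_ne_top _))).1 h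
    have h2 : a ≤ (((-M d) d : ℝ) + (ε k : ℝ)) + (c : EReal) :=
      (EReal.sub_le_iff_le_add (.inl (EReal.coe_ne_bot _))
        (.inl (EReal.coe_ne_top _))).1 h1
    have hms : ((-M d) d : ℝ) = -m := by simp [hm]
    rw [hms] at h2
    have h2' : a ≤ ((-m + ε k + c : ℝ) : EReal) := by
      rw [EReal.coe_add, EReal.coe_add]
      exact h2
    have h3 : a + ((η * m : ℝ) : EReal)
        ≤ ((-m + ε k + c : ℝ) : EReal) + ((η * m : ℝ) : EReal) :=
      add_le_add h2' le_rfl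
    have h4 : ((-m + ε k + c : ℝ) : EReal) + ((η * m : ℝ) : EReal) ≤ ((ε k : ℝ) : EReal) := by
      rw [← EReal.coe_add, EReal.coe_le_coe_iff]
      have hΛ := hΛbM d
      have : c ≤ (1 - η) * m := by rw [hc, hm]; linarith
      linarith
    exact h3.trans h4
  -- gap is bounded by ε under the premise
  have gapε : ∀ k : ℕ, (∀ n ≤ k, x n ∈ Ω) →
      gap (x (k + 1)) (x k) ≤ ((ε k : ℝ) : EReal) := by
    intro k hk
    refine le_trans ?_ (key k hk)
    have : (0 : EReal) ≤ ((η * M (x (k + 1) - x k) (x (k + 1) - x k) : ℝ) : EReal) := by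
      rw [← EReal.coe_zero, EReal.coe_le_coe_iff]
      exact mul_nonneg hη.le (hMpsd _)
    exact le_add_of_nonneg_right this
  -- all iterates are in Ω
  have hall : ∀ k : ℕ, ∀ n ≤ k, x n ∈ Ω := by
    intro k
    induction k with
    | zero => intro n hn; rw [Nat.le_zero.1 hn]; exact hx0
    | succ k ih =>
      intro n hn
      rcases Nat.lt_succ_iff_lt_or_eq.1 (Nat.lt_succ_of_le hn) with h | h
      · exact ih n (Nat.lt_succ_iff.1 h)
      · subst h
        apply hΩimp (k + 1) (by omega)
        calc ∑ j ∈ Finset.range (k + 1), gap (x (j + 1)) (x j)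
            ≤ ∑ j ∈ Finset.range (k + 1), ((ε j : ℝ) : EReal) := by
              refine Finset.sum_le_sum fun j hj => gapε j fun n hn => ih n ?_
              have := Finset.mem_range.1 hj
              omega
          _ = ((∑ j ∈ Finset.range (k + 1), ε j : ℝ) : EReal) :=
              (map_sum (⟨⟨Real.toEReal, EReal.coe_zero⟩, EReal.coe_add⟩ : ℝ →+ EReal) ε
                (Finset.range (k + 1))).symm
          _ ≤ (r : EReal) := EReal.coe_le_coe_iff.2 (hr (k + 1))
  exact ⟨fun k => hall k k le_rfl, fun k => key k (hall k)⟩
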